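/- arXiv:0804.3255 — 4 statements merged into one kernel-verified Lean document; each statement's English description precedes it below -/
import Mathlib

section
/- With the setup of the cyclic constraints c_j(ℓ) = sum_{i ∈ P_j} (ℓ_i − ℓ_{[i+1]}), the k × p matrix W whose j-th row represents the linear form c_j has rank exactly k − 1. -/
open Matrix


/-- The constraint matrix `W = W' - W''`, where `W'_{j,i} = 1_{i ∈ P_j}` and `W''` is `W'`
with rows circularly shifted right by one position (i.e. `W''_{j,i} = 1_{[i-1] ∈ P_j}`,
with `[i-1]` the cyclic predecessor, inverse of `finRotate p`), has rank exactly `k - 1`. -/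
theorem constraint_matrix_rank (p k : ℕ) (hk : 1 ≤ k) (hkp : k ≤ p)
    (P : Fin k → Finset (Fin p))
    (hne : ∀ j, (P j).Nonempty)
    (hdisj : ∀ j j', j ≠ j' → Disjoint (P j) (P j'))
    (hcover : (Finset.univ : Finset (Fin p)) = Finset.univ.biUnion P)
    (W : Matrix (Fin k) (Fin p) ℝ)
    (hW : ∀ j i, W j i = (if i ∈ P j then (1 : ℝ) else 0) -
        (if (finRotate p).symm i ∈ P j then (1 : ℝ) else 0)) :
    W.rank = k - 1 := by
  have hp0 : 0 < p := hk.trans hkp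
  obtain ⟨m, rfl⟩ : ∃ m, p = m + 1 := ⟨p - 1, (Nat.succ_pred_eq_of_pos hp0).symm⟩
  -- block map
  have hex : ∀ i : Fin (m + 1), ∃ j, i ∈ P j := by
    intro i
    have h : i ∈ Finset.univ.biUnion P := hcover ▸ Finset.mem_univ i
    simpa [Finset.mem_biUnion] using h
  choose b hb using hex
  have hmem : ∀ (i : Fin (m + 1)) (j : Fin k), i ∈ P j ↔ j = b i := by
    intro i j
    constructor
    · intro h
      by_contra hne'
      exact Finset.disjoint_left.mp (hdisj j (b i) hne') h (hb i)
    · rintro rfl; exact hb i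
  set σ := finRotate (m + 1) with hσ
  have hsum : ∀ (a : Fin k → ℝ) (i : Fin (m + 1)),
      (Wᵀ *ᵥ a) i = a (b i) - a (b (σ.symm i)) := by
    intro a i
    have : ∀ j : Fin k, Wᵀ i j * a j =
        (if j = b i then a j else 0) - (if j = b (σ.symm i) then a j else 0) := by
      intro j
      simp only [Matrix.transpose_apply, hW, hmem, sub_mul, one_mul, zero_mul, ite_mul]
    simp only [Matrix.mulVec, dotProduct, this, Finset.sum_sub_distrib,
      Finset.sum_ite_eq', Finset.mem_univ, if_true]
  have hconst : ∀ (a : Fin k → ℝ), (∀ i, a (b i) = a (b (σ.symm i))) →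
      ∀ i, a (b i) = a (b 0) := by
    intro a ha
    have hstep : ∀ i, a (b (σ i)) = a (b i) := by
      intro i
      have := ha (σ i)
      simpa using this
    have hiter : ∀ n : ℕ, a (b (σ^[n] 0)) = a (b 0) := by
      intro n
      induction n with
      | zero => rfl
      | succ n ih => rw [Function.iterate_succ_apply', hstep, ih]
    open Fin.NatCast in
    have hrot : ∀ n : ℕ, σ^[n] (0 : Fin (m + 1)) = (n : Fin (m + 1)) := by
      intro n
      induction n with
      | zero => simp
      | succ n ih =>
        rw [Function.iterate_succ_apply', ih, hσ, finRotate_succ_apply]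
        push_cast
        ring
    intro i
    have := hiter i.val
    open Fin.NatCast in
    rwa [hrot, Fin.cast_val_eq_self] at this
  have hker : LinearMap.ker (Wᵀ.mulVecLin) =
      Submodule.span ℝ {(fun _ => 1 : Fin k → ℝ)} := by
    apply le_antisymm
    · intro a ha
      rw [LinearMap.mem_ker] at ha
      have ha' : ∀ i, a (b i) = a (b (σ.symm i)) := by
        intro i
        have := congrFun ha i
        rw [Matrix.mulVecLin_apply] at this
        have h2 := hsum a i
        rw [this] at h2
        simp only [Pi.zero_apply] at h2
        linarith
      have hc := hconst a ha'
      rw [Submodule.mem_span_singleton]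
      refine ⟨a (b 0), ?_⟩
      funext j
      obtain ⟨i, hi⟩ := hne j
      have : j = b i := (hmem i j).mp hi
      simp [this, hc i]
    · rw [Submodule.span_singleton_le_iff_mem, LinearMap.mem_ker]
      funext i
      rw [Matrix.mulVecLin_apply, hsum]
      simp
  have hrank_def : Wᵀ.rank = Module.finrank ℝ (LinearMap.range (Wᵀ.mulVecLin)) := rfl
  have h := LinearMap.finrank_range_add_finrank_ker (Wᵀ.mulVecLin)
  rw [hker] at h
  have hone : (fun _ => 1 : Fin k → ℝ) ≠ 0 := by
    intro h0
    have := congrFun h0 ⟨0, hk⟩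
    simp at this
  rw [finrank_span_singleton hone] at h
  have hfr : Module.finrank ℝ (Fin k → ℝ) = k := by simp
  rw [hfr] at h
  rw [← Matrix.rank_transpose W, hrank_def]
  omega
end

section
/- The convolution identity ∫_{−∞}^{+∞} sinc(a − y) · sinc(y − b) dy = sinc(a − b) holds for all real a, b. -/
open Real MeasureTheory Set intervalIntegral FourierTransform

/-- The normalized sinc function. -/
noncomputable def nsinc (y : ℝ) : ℝ := if y = 0 then 1 else Real.sin (π * y) / (π * y)

lemma nsinc_neg (x : ℝ) : nsinc (-x) = nsinc x := by
  unfold nsinc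
  rcases eq_or_ne x 0 with h | h
  · simp [h]
  · rw [if_neg (neg_ne_zero.mpr h), if_neg h, mul_neg, Real.sin_neg, neg_div_neg_eq]

lemma nsinc_abs_le_one (x : ℝ) : |nsinc x| ≤ 1 := by
  unfold nsinc
  rcases eq_or_ne x 0 with h | h
  · simp [h]
  · rw [if_neg h, abs_div, div_le_one (by positivity)]
    exact Real.abs_sin_le_abs

lemma nsinc_sq_le (x : ℝ) : nsinc x ^ 2 ≤ 2 / (1 + x ^ 2) := by
  rcases le_or_gt (x ^ 2) 1 with h | h
  · have h1 : nsinc x ^ 2 ≤ 1 := by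
      nlinarith [nsinc_abs_le_one x, abs_nonneg (nsinc x), sq_abs (nsinc x)]
    rw [le_div_iff₀ (by positivity)]
    nlinarith
  · have hx : x ≠ 0 := by intro h0; rw [h0] at h; norm_num at h
    rw [nsinc, if_neg hx]
    have h1 : (Real.sin (π * x) / (π * x)) ^ 2 = Real.sin (π * x) ^ 2 / (π ^ 2 * x ^ 2) := by
      rw [div_pow, mul_pow]
    rw [h1, div_le_div_iff₀ (by positivity) (by positivity)]
    have hs : Real.sin (π * x) ^ 2 ≤ 1 := by
      nlinarith [Real.abs_sin_le_one (π * x), abs_nonneg (Real.sin (π*x)), sq_abs (Real.sin (π*x))]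
    have hπ : (3:ℝ) ≤ π := by nlinarith [Real.pi_gt_three]
    have h9 : (9:ℝ) * x ^ 2 ≤ π ^ 2 * x ^ 2 :=
      mul_le_mul_of_nonneg_right (by nlinarith) (sq_nonneg x)
    nlinarith [mul_le_mul_of_nonneg_right hs (show (0:ℝ) ≤ 1 + x ^ 2 by positivity)]

lemma nsinc_meas : Measurable nsinc := by
  unfold nsinc
  exact Measurable.ite (measurableSet_singleton 0) measurable_const (by fun_prop)


noncomputable def eI (c s : ℝ) : ℂ := Complex.exp (↑(2 * π * c * s) * Complex.I)

lemma eI_cont (c : ℝ) : Continuous (eI c) := by unfold eI; fun_prop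

lemma eI_norm (c s : ℝ) : ‖eI c s‖ = 1 := by unfold eI; exact Complex.norm_exp_ofReal_mul_I _

noncomputable def UU (a : ℝ) : ℝ → ℂ :=
  Set.indicator (Icc (-(1/2)) (1/2)) (fun s => eI a s)

lemma UU_meas (a : ℝ) : Measurable (UU a) :=
  (eI_cont a).measurable.indicator measurableSet_Icc

lemma UU_norm_le (a s : ℝ) : ‖UU a s‖ ≤ 1 := by
  rw [UU]
  by_cases hs : s ∈ Icc (-(1/2) : ℝ) (1/2)
  · rw [Set.indicator_of_mem hs, eI_norm]
  · rw [Set.indicator_of_notMem hs]; simp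

noncomputable def GG (c : ℝ) (x : ℝ) : ℂ := ∫ s in (0:ℝ)..x, eI c s

lemma GG_cont (c : ℝ) : Continuous (GG c) :=
  intervalIntegral.continuous_primitive
    (fun _ _ => ((eI_cont c).intervalIntegrable _ _)) 0

noncomputable def ll (t : ℝ) : ℝ := max (-(1/2)) (t - 1/2)
noncomputable def rr (t : ℝ) : ℝ := max (ll t) (min (1/2) (t + 1/2))

lemma ll_le_rr (t : ℝ) : ll t ≤ rr t := le_max_left _ _

lemma rr_sub_ll (t : ℝ) : rr t - ll t ≤ 1 := by
  rw [rr]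
  rcases max_cases (ll t) (min (1/2) (t + 1/2)) with ⟨h1, _⟩ | ⟨h1, _⟩ <;> rw [h1]
  · linarith
  · have h2 := min_le_right (1/2 : ℝ) (t + 1/2)
    have h3 := le_max_right (-(1/2) : ℝ) (t - 1/2)
    simp only [ll]
    linarith

noncomputable def ww (a b : ℝ) : ℝ → ℂ :=
  fun t => eI b t * (GG (a - b) (rr t) - GG (a - b) (ll t))

lemma ww_cont (a b : ℝ) : Continuous (ww a b) := by
  unfold ww rr ll
  exact (eI_cont b).mul (((GG_cont _).comp (by fun_prop)).sub ((GG_cont _).comp (by fun_prop)))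

lemma GG_sub (c x y : ℝ) : GG c y - GG c x = ∫ s in x..y, eI c s := by
  rw [GG, GG, intervalIntegral.integral_interval_sub_left
    ((eI_cont _).intervalIntegrable _ _) ((eI_cont _).intervalIntegrable _ _)]

lemma ww_norm_le (a b t : ℝ) :
    ‖ww a b t‖ ≤ Set.indicator (Icc (-1 : ℝ) 1) (fun _ => (1:ℝ)) t := by
  have hbound : ‖ww a b t‖ ≤ 1 := by
    rw [ww, norm_mul, eI_norm, one_mul, GG_sub]
    calc ‖∫ s in (ll t)..(rr t), eI (a-b) s‖ ≤ 1 * |rr t - ll t| :=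
          intervalIntegral.norm_integral_le_of_norm_le_const
            (fun x _ => le_of_eq (eI_norm _ _))
      _ ≤ 1 := by
          rw [one_mul, abs_of_nonneg (by linarith [ll_le_rr t])]
          exact rr_sub_ll t
  by_cases ht : t ∈ Icc (-1 : ℝ) 1
  · rw [Set.indicator_of_mem ht]; exact hbound
  · rw [Set.indicator_of_notMem ht]
    rw [Set.mem_Icc, not_and_or] at ht
    have hz : rr t = ll t := by
      rw [rr, max_eq_left]
      rcases ht with ht | ht <;> push_neg at ht
      · exact le_trans (min_le_right _ _) (by simp only [ll]; exact le_trans (by linarith) (le_max_left _ _))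
      · exact le_trans (min_le_left _ _) (by simp only [ll]; exact le_trans (by linarith) (le_max_right _ _))
    rw [ww, hz]
    simp

lemma ww_integrable (a b : ℝ) : Integrable (ww a b) := by
  apply Integrable.mono' (g := Set.indicator (Icc (-1 : ℝ) 1) (fun _ => (1:ℝ)))
  · rw [integrable_indicator_iff measurableSet_Icc]
    exact (integrableOn_const_iff).mpr (Or.inr (by rw [Real.volume_Icc]; exact ENNReal.ofReal_lt_top))
  · exact (ww_cont a b).aestronglyMeasurable
  · exact Filter.Eventually.of_forall (ww_norm_le a b)

lemma cexp_integral_half (x : ℝ) :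
    ∫ s in (-(1/2) : ℝ)..(1/2), Complex.exp (↑(2 * π * x * s) * Complex.I)
      = (nsinc x : ℂ) := by
  rcases eq_or_ne x 0 with h | h
  · norm_num [h, nsinc]
  have hπ : (π : ℝ) ≠ 0 := Real.pi_ne_zero
  set c : ℂ := ((2 * π * x : ℝ):ℂ) * Complex.I with hcdef
  have hc : c ≠ 0 := by
    simp [hcdef, Complex.ext_iff, hπ, h, Real.pi_ne_zero, mul_ne_zero]
  have key := integral_exp_mul_complex (a := (-(1/2):ℝ)) (b := (1/2:ℝ)) (c := c) hc
  have harg : ∀ s : ℝ, (↑(2 * π * x * s) : ℂ) * Complex.I = c * s := by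
    intro s; simp [hcdef]; push_cast; ring
  simp_rw [harg]
  rw [key, hcdef]
  have h1 : ((2 * π * x : ℝ):ℂ) * Complex.I * (1/2 : ℝ) = (π * x : ℝ) * Complex.I := by
    push_cast; ring
  have h2 : ((2 * π * x : ℝ):ℂ) * Complex.I * (-(1/2) : ℝ) = -((π * x : ℝ) * Complex.I) := by
    push_cast; ring
  have h3 : (-(((π * x : ℝ):ℂ) * Complex.I)) = ((-(π*x) : ℝ):ℂ) * Complex.I := by
    push_cast; ring
  rw [h1, h2, h3, Complex.exp_mul_I, Complex.exp_mul_I]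
  rw [nsinc, if_neg h]
  have hpx : ((π * x : ℝ):ℂ) ≠ 0 := by
    simpa using mul_ne_zero hπ h
  rw [Complex.ofReal_div]
  rw [← Complex.ofReal_cos, ← Complex.ofReal_sin, ← Complex.ofReal_cos, ← Complex.ofReal_sin]
  push_cast [Real.cos_neg, Real.sin_neg]
  field_simp [Complex.I_ne_zero]
  ring
lemma eI_mul (c s u : ℝ) : eI c s * eI c u = eI c (s + u) := by
  rw [eI, eI, eI, ← Complex.exp_add]; push_cast; ring_nf

lemma ww_eq_conv (a b t : ℝ) : ww a b t = ∫ s, UU a s * UU b (t - s) := by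
  have hfun : (fun s => UU a s * UU b (t - s))
      = Set.indicator (Icc (ll t) (min (1/2) (t + 1/2)))
          (fun s => eI b t * eI (a - b) s) := by
    funext s
    by_cases hs : s ∈ Icc (ll t) (min (1/2) (t + 1/2))
    · obtain ⟨h1, h2⟩ := hs
      rw [ll] at h1
      have hs1 : s ∈ Icc (-(1/2) : ℝ) (1/2) := by
        constructor
        · exact le_trans (le_max_left _ _) h1
        · exact le_trans h2 (min_le_left _ _)
      have hs2 : t - s ∈ Icc (-(1/2) : ℝ) (1/2) := by
        constructor
        · have := le_trans h2 (min_le_right _ _); linarith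
        · have := le_trans (le_max_right _ _) h1; linarith
      rw [Set.indicator_of_mem (by exact ⟨h1, h2⟩), UU, UU,
        Set.indicator_of_mem hs1, Set.indicator_of_mem hs2]
      rw [eI, eI, eI, eI, ← Complex.exp_add, ← Complex.exp_add]
      push_cast; ring_nf
    · rw [Set.indicator_of_notMem hs]
      rw [Set.mem_Icc, not_and_or] at hs
      rcases hs with hs | hs
      · push_neg at hs
        rw [ll, lt_max_iff] at hs
        rcases hs with hs | hs
        · have h1 : s ∉ Icc (-(1/2) : ℝ) (1/2) := by
            intro ⟨hh, _⟩; linarith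
          rw [UU, Set.indicator_of_notMem h1, zero_mul]
        · have h1 : t - s ∉ Icc (-(1/2) : ℝ) (1/2) := by
            intro ⟨_, hh⟩; linarith
          rw [UU, UU, Set.indicator_of_notMem h1, mul_zero]
      · push_neg at hs
        rw [min_lt_iff] at hs
        rcases hs with hs | hs
        · have h1 : s ∉ Icc (-(1/2) : ℝ) (1/2) := by
            intro ⟨_, hh⟩; linarith
          rw [UU, Set.indicator_of_notMem h1, zero_mul]
        · have h1 : t - s ∉ Icc (-(1/2) : ℝ) (1/2) := by
            intro ⟨hh, _⟩; linarith
          rw [UU, UU, Set.indicator_of_notMem h1, mul_zero]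
  rw [hfun, MeasureTheory.integral_indicator measurableSet_Icc]
  by_cases ht : ll t ≤ min (1/2) (t + 1/2)
  · have hr : rr t = min (1/2) (t + 1/2) := max_eq_right ht
    rw [MeasureTheory.integral_Icc_eq_integral_Ioc,
      ← intervalIntegral.integral_of_le ht, intervalIntegral.integral_const_mul,
      ww, hr]
    congr 1
    rw [GG, GG, intervalIntegral.integral_interval_sub_left
      ((eI_cont _).intervalIntegrable _ _) ((eI_cont _).intervalIntegrable _ _)]
  · push_neg at ht
    rw [Set.Icc_eq_empty (not_le.mpr ht)]
    have hr : rr t = ll t := max_eq_left ht.le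
    simp [ww, hr]

lemma eI_mulpt (c d s : ℝ) : eI c s * eI d s = eI (c + d) s := by
  rw [eI, eI, eI, ← Complex.exp_add]; push_cast; ring_nf

lemma fourier_UU (a y : ℝ) : ∫ s, eI (-y) s * UU a s = ((nsinc (a - y) : ℝ) : ℂ) := by
  have hfun : (fun s => eI (-y) s * UU a s)
      = Set.indicator (Icc (-(1/2)) (1/2)) (fun s => eI (a - y) s) := by
    funext s
    by_cases hs : s ∈ Icc (-(1/2) : ℝ) (1/2)
    · rw [UU, Set.indicator_of_mem hs, Set.indicator_of_mem hs, eI_mulpt,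
        show -y + a = a - y from by ring]
    · rw [UU, Set.indicator_of_notMem hs, Set.indicator_of_notMem hs, mul_zero]
  rw [hfun, MeasureTheory.integral_indicator measurableSet_Icc,
    MeasureTheory.integral_Icc_eq_integral_Ioc,
    ← intervalIntegral.integral_of_le (by norm_num : (-(1/2):ℝ) ≤ 1/2)]
  exact cexp_integral_half (a - y)

lemma prod_integrable (a b y : ℝ) :
    Integrable (fun p : ℝ × ℝ => eI (-y) p.1 * (UU a p.2 * UU b (p.1 - p.2))) := by
  apply Integrable.mono'
    (g := Set.indicator (Icc (-1 : ℝ) 1 ×ˢ Icc (-(1/2) : ℝ) (1/2)) (fun _ => (1:ℝ)))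
  · rw [integrable_indicator_iff (measurableSet_Icc.prod measurableSet_Icc)]
    refine (integrableOn_const_iff).mpr (Or.inr ?_)
    rw [Measure.volume_eq_prod, Measure.prod_prod, Real.volume_Icc, Real.volume_Icc]
    exact ENNReal.mul_lt_top ENNReal.ofReal_lt_top ENNReal.ofReal_lt_top
  · exact (((eI_cont (-y)).measurable.comp measurable_fst).mul
      (((UU_meas a).comp measurable_snd).mul
        ((UU_meas b).comp (measurable_fst.sub measurable_snd)))).aestronglyMeasurable
  · refine Filter.Eventually.of_forall fun p => ?_
    by_cases hp : p ∈ Icc (-1 : ℝ) 1 ×ˢ Icc (-(1/2) : ℝ) (1/2)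
    · rw [Set.indicator_of_mem hp]
      calc ‖eI (-y) p.1 * (UU a p.2 * UU b (p.1 - p.2))‖
          = ‖UU a p.2‖ * ‖UU b (p.1 - p.2)‖ := by rw [norm_mul, norm_mul, eI_norm, one_mul]
        _ ≤ 1 * 1 := mul_le_mul (UU_norm_le _ _) (UU_norm_le _ _) (norm_nonneg _) zero_le_one
        _ = 1 := one_mul 1
    · rw [Set.indicator_of_notMem hp]
      rw [Set.mem_prod, not_and_or] at hp
      by_cases h2 : p.2 ∈ Icc (-(1/2) : ℝ) (1/2)
      · have h1 : p.1 ∉ Icc (-1 : ℝ) 1 := by tauto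
        rw [Set.mem_Icc, not_and_or] at h1
        have hsub : p.1 - p.2 ∉ Icc (-(1/2) : ℝ) (1/2) := by
          rw [Set.mem_Icc] at h2 ⊢
          rcases h1 with h1 | h1 <;> push_neg at h1 ⊢
          · intro hle; exfalso; obtain ⟨hl, hr⟩ := h2; linarith
          · intro hle; obtain ⟨hl, hr⟩ := h2; linarith
        rw [show UU b (p.1 - p.2) = 0 from Set.indicator_of_notMem hsub _]
        simp
      · rw [show UU a p.2 = 0 from Set.indicator_of_notMem h2 _]
        simp

lemma fourier_ww (a b y : ℝ) :
    𝓕 (ww a b) y = ((nsinc (a - y) * nsinc (y - b) : ℝ) : ℂ) := by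
  rw [Real.fourier_real_eq_integral_exp_smul]
  have h1 : ∀ v : ℝ, Complex.exp (↑(-2 * π * v * y) * Complex.I) • ww a b v
      = eI (-y) v * ww a b v := by
    intro v
    rw [smul_eq_mul, eI, show ((-2 * π * v * y : ℝ) : ℂ) = ((2 * π * (-y) * v : ℝ) : ℂ) from by
      push_cast; ring]
  simp_rw [h1, ww_eq_conv, ← MeasureTheory.integral_const_mul]
  rw [MeasureTheory.integral_integral_swap (by exact prod_integrable a b y)]
  have h2 : ∀ s : ℝ, (∫ v, eI (-y) v * (UU a s * UU b (v - s)))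
      = (eI (-y) s * UU a s) * ∫ v, eI (-y) v * UU b v := by
    intro s
    rw [← MeasureTheory.integral_add_right_eq_self
      (fun v => eI (-y) v * (UU a s * UU b (v - s))) s]
    have h3 : ∀ v : ℝ, eI (-y) (v + s) * (UU a s * UU b (v + s - s))
        = (eI (-y) s * UU a s) * (eI (-y) v * UU b v) := by
      intro v
      rw [add_sub_cancel_right, ← eI_mul]
      ring
    simp_rw [h3]
    rw [MeasureTheory.integral_const_mul]
  simp_rw [h2]
  rw [MeasureTheory.integral_mul_const, fourier_UU, fourier_UU,
    show b - y = -(y - b) from by ring, nsinc_neg]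
  push_cast
  ring

lemma sinc_integral_complex_ofReal (f : ℝ → ℝ) :
    ∫ x : ℝ, ((f x : ℝ) : ℂ) = ((∫ x : ℝ, f x : ℝ) : ℂ) :=
  integral_ofReal

/-- Convolution identity: `∫ sinc(a - y) sinc(y - b) dy = sinc(a - b)`. -/
theorem sinc_convolution (a b : ℝ) :
    ∫ y : ℝ, nsinc (a - y) * nsinc (y - b) = nsinc (a - b) := by
  have hInt2 : Integrable (fun y : ℝ => nsinc (a - y) * nsinc (y - b)) := by
    apply Integrable.mono'
      (g := fun y => (1 + (y - a) ^ 2)⁻¹ + (1 + (y - b) ^ 2)⁻¹)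
    · exact (integrable_inv_one_add_sq.comp_sub_right a).add
        (integrable_inv_one_add_sq.comp_sub_right b)
    · exact ((nsinc_meas.comp (measurable_const.sub measurable_id)).mul
        (nsinc_meas.comp (measurable_id.sub measurable_const))).aestronglyMeasurable
    · refine Filter.Eventually.of_forall fun y => ?_
      have e1 := nsinc_sq_le (a - y)
      have e2 := nsinc_sq_le (y - b)
      have hpq : |nsinc (a - y) * nsinc (y - b)|
          ≤ (nsinc (a - y) ^ 2 + nsinc (y - b) ^ 2) / 2 := by
        rw [abs_mul]
        nlinarith [sq_nonneg (|nsinc (a - y)| - |nsinc (y - b)|),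
          sq_abs (nsinc (a - y)), sq_abs (nsinc (y - b))]
      have hsq : ((a - y) ^ 2 : ℝ) = (y - a) ^ 2 := by ring
      rw [hsq] at e1
      have d1 : (2 : ℝ) / (1 + (y - a) ^ 2) = 2 * (1 + (y - a) ^ 2)⁻¹ := by
        rw [div_eq_mul_inv]
      have d2 : (2 : ℝ) / (1 + (y - b) ^ 2) = 2 * (1 + (y - b) ^ 2)⁻¹ := by
        rw [div_eq_mul_inv]
      rw [d1] at e1; rw [d2] at e2
      calc |nsinc (a - y) * nsinc (y - b)|
          ≤ (nsinc (a - y) ^ 2 + nsinc (y - b) ^ 2) / 2 := hpq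
        _ ≤ (1 + (y - a) ^ 2)⁻¹ + (1 + (y - b) ^ 2)⁻¹ := by linarith
  have hFw : 𝓕 (ww a b) = fun y => ((nsinc (a - y) * nsinc (y - b) : ℝ) : ℂ) :=
    funext (fourier_ww a b)
  have hInt𝓕 : Integrable (𝓕 (ww a b)) := by rw [hFw]; exact hInt2.ofReal
  have hinv := (ww_integrable a b).fourierInv_fourier_eq hInt𝓕
    ((ww_cont a b).continuousAt (x := 0))
  rw [Real.fourierInv_eq'] at hinv
  simp only [RCLike.inner_apply, conj_trivial, mul_zero, Complex.ofReal_zero, zero_mul,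
    Complex.exp_zero, one_smul] at hinv
  rw [hFw] at hinv
  simp only at hinv
  rw [sinc_integral_complex_ofReal] at hinv
  have hw0 : ww a b 0 = ((nsinc (a - b) : ℝ) : ℂ) := by
    have hl : ll 0 = -(1/2) := by rw [ll]; norm_num
    have hr : rr 0 = 1/2 := by rw [rr, hl]; norm_num
    rw [ww, hl, hr, GG_sub, show eI b 0 = 1 from by simp [eI], one_mul]
    exact cexp_integral_half (a - b)
  rw [hw0] at hinv
  exact_mod_cast hinv
end

section
/- The p-th moment of the Marčenko-Pastur distribution with ratio parameter β ∈ (0,1] equals the Narayana polynomial: ∫_{c_2}^{c_1} x^p · sqrt((c_1 − x)(x − c_2)) / (2π x β) dx = sum_{k=1}^{p} T(p,k) β^{p−k}, where T(p,k) = (1/k)·C(p−1, k−1)·C(p, k−1) are the Narayana numbers and c_{1,2} = (1 ± √β)^2. -/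
open Real intervalIntegral Finset Polynomial



/-- Vandermonde-type sum. -/
lemma vand_sum (a m : ℕ) :
    ∑ i ∈ range (a + 1), (a + 1).choose (i + 1) * m.choose i
      = (a + 1 + m).choose (m + 1) := by
  have h := Nat.add_choose_eq (a + 1) m (m + 1)
  rw [Finset.Nat.sum_antidiagonal_eq_sum_range_succ_mk] at h
  rw [Finset.sum_range_succ'] at h
  simp only [Nat.choose_zero_right, one_mul, Nat.sub_zero,
    Nat.choose_succ_self, mul_zero, add_zero] at h
  -- h : (a+1+m).choose (m+1) = ∑ i in range (m+1), (a+1).choose (i+1) * m.choose (m+1-(i+1))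
  have h2 : ∑ i ∈ range (m + 1), (a + 1).choose (i + 1) * m.choose (m + 1 - (i + 1))
      = ∑ i ∈ range (m + 1), (a + 1).choose (i + 1) * m.choose i := by
    refine Finset.sum_congr rfl fun i hi => ?_
    have hi' : i ≤ m := by simpa [Nat.lt_succ_iff] using hi
    have : m + 1 - (i + 1) = m - i := by omega
    rw [this, Nat.choose_symm hi']
  rw [h2] at h
  -- extend both sums to range (a + m + 2)
  have e1 : ∑ i ∈ range (m + 1), (a + 1).choose (i + 1) * m.choose i
      = ∑ i ∈ range (a + m + 2), (a + 1).choose (i + 1) * m.choose i := by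
    refine Finset.sum_subset (Finset.range_subset_range.2 (by omega)) fun i _ hi => ?_
    have : m < i := by simpa [Nat.lt_succ_iff] using hi
    simp [Nat.choose_eq_zero_of_lt this]
  have e2 : ∑ i ∈ range (a + 1), (a + 1).choose (i + 1) * m.choose i
      = ∑ i ∈ range (a + m + 2), (a + 1).choose (i + 1) * m.choose i := by
    refine Finset.sum_subset (Finset.range_subset_range.2 (by omega)) fun i _ hi => ?_
    have : a + 1 < i + 1 := by simp at hi; omega
    simp [Nat.choose_eq_zero_of_lt this]
  rw [e2, ← e1, ← h]

/-- Termwise trinomial identity. -/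
lemma term_id (n e i : ℕ) (hie : i ≤ e) (hen : e ≤ n) :
    n.choose (2 * i) * (2 * i).choose i * (n - 2 * i).choose (e - i)
      = n.choose e * ((e.choose i) * (n - e).choose i) := by
  by_cases h2i : 2 * i ≤ n
  · have h1 : n.choose (2 * i) * (2 * i).choose i = n.choose i * (n - i).choose i := by
      have := Nat.choose_mul (n := n) (k := 2 * i) (s := i) (by omega)
      simpa [show 2 * i - i = i by omega] using this
    by_cases hei : e ≤ n - i
    · have h2 : (n - i).choose e * e.choose i
          = (n - i).choose i * (n - 2 * i).choose (e - i) := by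
        have := Nat.choose_mul (n := n - i) (k := e) (s := i) hie
        simpa [show n - i - i = n - 2 * i by omega] using this
      have h3 : n.choose (i + e) * (i + e).choose i = n.choose i * (n - i).choose e := by
        have := Nat.choose_mul (n := n) (k := i + e) (s := i) (by omega)
        simpa [show i + e - i = e by omega] using this
      have h4 : n.choose (i + e) * (i + e).choose e = n.choose e * (n - e).choose i := by
        have := Nat.choose_mul (n := n) (k := i + e) (s := e) (by omega)
        simpa [show i + e - e = i by omega] using this
      have h5 : (i + e).choose i = (i + e).choose e := by
        rw [← Nat.choose_symm (by omega : e ≤ i + e), show i + e - e = i by omega]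
      calc n.choose (2 * i) * (2 * i).choose i * (n - 2 * i).choose (e - i)
          = n.choose i * ((n - i).choose i * (n - 2 * i).choose (e - i)) := by
            rw [h1]; ring
        _ = n.choose i * ((n - i).choose e * e.choose i) := by rw [h2]
        _ = n.choose (i + e) * (i + e).choose i * e.choose i := by rw [mul_comm ((n-i).choose e) (e.choose i), ← mul_assoc, mul_comm (n.choose i) (e.choose i), mul_assoc, ← h3]; ring
        _ = n.choose e * (n - e).choose i * e.choose i := by rw [h5, h4]
        _ = n.choose e * (e.choose i * (n - e).choose i) := by ring
    · have z1 : (n - 2 * i).choose (e - i) = 0 :=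
        Nat.choose_eq_zero_of_lt (by omega)
      have z2 : (n - e).choose i = 0 := Nat.choose_eq_zero_of_lt (by omega)
      simp [z1, z2]
  · have z1 : n.choose (2 * i) = 0 := Nat.choose_eq_zero_of_lt (by omega)
    have z2 : (n - e).choose i = 0 := Nat.choose_eq_zero_of_lt (by omega)
    simp [z1, z2]


/-- the coefficient identity over ℝ -/
lemma coeff_id (p e : ℕ) (hp : 1 ≤ p) (he : e ≤ p - 1) :
    ∑ i ∈ range (e + 1),
        ((p - 1).choose (2 * i) * (2 * i).choose i : ℝ) / (i + 1)
          * ((p - 1 - 2 * i).choose (e - i) : ℝ)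
      = ((p - 1).choose e : ℝ) * (p.choose e : ℝ) / (e + 1) := by
  have step : ∀ i ∈ range (e + 1),
      ((p - 1).choose (2 * i) * (2 * i).choose i : ℝ) / (i + 1)
        * ((p - 1 - 2 * i).choose (e - i) : ℝ)
      = ((p - 1).choose e : ℝ) / (e + 1)
          * (((e + 1).choose (i + 1) : ℝ) * ((p - 1 - e).choose i : ℝ)) := by
    intro i hi
    have hie : i ≤ e := by simpa [Nat.lt_succ_iff] using hi
    have h1 : ((p - 1).choose (2 * i) * (2 * i).choose i : ℝ)
        * ((p - 1 - 2 * i).choose (e - i) : ℝ)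
        = ((p - 1).choose e : ℝ) * ((e.choose i : ℝ) * ((p - 1 - e).choose i : ℝ)) := by
      exact_mod_cast congrArg (Nat.cast : ℕ → ℝ) (term_id (p - 1) e i hie he)
    have h2 : ((e : ℝ) + 1) * (e.choose i : ℝ) = ((e + 1).choose (i + 1) : ℝ) * (i + 1) := by
      exact_mod_cast congrArg (Nat.cast : ℕ → ℝ) (Nat.add_one_mul_choose_eq e i)
    have hi1 : ((i : ℝ) + 1) ≠ 0 := by positivity
    have he1 : ((e : ℝ) + 1) ≠ 0 := by positivity
    field_simp
    linear_combination ((e : ℝ) + 1) * h1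
      + (((p - 1).choose e : ℝ)) * (((p - 1 - e).choose i : ℝ)) * h2
  rw [Finset.sum_congr rfl step, ← Finset.mul_sum]
  have hv : ∑ i ∈ range (e + 1), (((e + 1).choose (i + 1) : ℝ) * ((p - 1 - e).choose i : ℝ))
      = ((e + 1 + (p - 1 - e)).choose ((p - 1 - e) + 1) : ℝ) := by
    exact_mod_cast congrArg (Nat.cast : ℕ → ℝ) (vand_sum e (p - 1 - e))
  rw [hv]
  have h3 : e + 1 + (p - 1 - e) = p := by omega
  have h4 : (p - 1 - e) + 1 = p - e := by omega
  rw [h3, h4, Nat.choose_symm (by omega : e ≤ p)]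
  ring


lemma narayana (p : ℕ) (hp : 1 ≤ p) (β : ℝ) :
    ∑ i ∈ range p, ((p - 1).choose (2 * i) * (2 * i).choose i : ℝ) / (i + 1)
        * (β ^ i * (1 + β) ^ (p - 1 - 2 * i))
      = ∑ k ∈ Finset.Icc 1 p,
          (1 / (k : ℝ)) * ((p - 1).choose (k - 1) : ℝ) * (p.choose (k - 1) : ℝ)
            * β ^ (p - k) := by
  set c : ℕ → ℝ := fun i => ((p - 1).choose (2 * i) * (2 * i).choose i : ℝ) / (i + 1) with hc
  set b : ℕ → ℝ := fun e => ((p - 1).choose e : ℝ) * (p.choose e : ℝ) / (e + 1) with hb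
  have hpoly :
      (∑ i ∈ range p, Polynomial.C (c i) * ((1 + X) ^ (p - 1 - 2 * i) * X ^ i) : ℝ[X])
        = ∑ e ∈ range p, Polynomial.C (b e) * X ^ (p - 1 - e) := by
    ext n
    rw [finset_sum_coeff, finset_sum_coeff]
    simp only [coeff_C_mul, coeff_mul_X_pow', coeff_one_add_X_pow,
      C_mul_X_pow_eq_monomial, coeff_monomial]
    by_cases hn : n ≤ p - 1
    · have hR : ∑ e ∈ range p, (if p - 1 - e = n then b e else 0)
          = b (p - 1 - n) := by
        rw [Finset.sum_eq_single (p - 1 - n)]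
        · have h9 : p - 1 - (p - 1 - n) = n := by omega
          rw [if_pos h9]
        · intro e he hne
          have h9 : ¬ (p - 1 - e = n) := by
            simp only [Finset.mem_range] at he; omega
          rw [if_neg h9]
        · intro h
          exact absurd (Finset.mem_range.2 (by omega)) h
      rw [hR]
      have hL : ∑ i ∈ range p, c i * (if i ≤ n then ((p - 1 - 2 * i).choose (n - i) : ℝ) else 0)
          = ∑ i ∈ range (n + 1), c i * ((p - 1 - 2 * i).choose (n - i) : ℝ) := by
        rw [← Finset.sum_subset (Finset.range_subset_range.2 (by omega : n + 1 ≤ p))]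
        · exact Finset.sum_congr rfl fun i hi => by
            have : i ≤ n := by simpa [Nat.lt_succ_iff] using hi
            simp [this]
        · intro i _ hi
          have : ¬ i ≤ n := by simp only [Finset.mem_range, Nat.lt_succ_iff] at hi; omega
          simp [this]
      rw [hL, coeff_id p n hp hn]
      -- now show C(p-1,n)*C(p,n)/(n+1) = b (p-1-n)
      have h1 : (p - 1 - n) + 1 = p - n := by omega
      have h2 : (p - 1).choose (p - 1 - n) = (p - 1).choose n := Nat.choose_symm hn
      have h3 : p.choose (p - 1 - n) = p.choose (n + 1) := by
        have : p - (n + 1) = p - 1 - n := by omega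
        rw [← this, Nat.choose_symm (by omega : n + 1 ≤ p)]
      have h4 : (p.choose (n + 1) : ℝ) * (n + 1) = (p.choose n : ℝ) * (p - n : ℕ) := by
        exact_mod_cast congrArg (Nat.cast : ℕ → ℝ) (Nat.choose_succ_right_eq p n)
      simp only [hb, h1, h2, h3]
      have hcast : ((p - n : ℕ) : ℝ) = (p : ℝ) - n := by
        rw [Nat.cast_sub (by omega)]
      rw [hcast] at h4
      have hc2 : ((p - 1 - n : ℕ) : ℝ) + 1 = (p : ℝ) - n := by
        rw [Nat.cast_sub (by omega : n ≤ p - 1), Nat.cast_sub (by omega : 1 ≤ p)]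
        push_cast; ring
      rw [hc2]
      have hn1 : ((n : ℝ) + 1) ≠ 0 := by positivity
      have hpn : (p : ℝ) - n ≠ 0 := by
        have : (n : ℝ) < p := by exact_mod_cast (by omega : n < p)
        linarith
      rw [div_eq_div_iff hn1 hpn]
      linear_combination (-(((p-1).choose n : ℝ))) * h4
    · have hR : ∀ e ∈ range p, (if p - 1 - e = n then b e else 0) = 0 := by
        intro e he
        have : ¬ (p - 1 - e = n) := by simp only [Finset.mem_range] at he; omega
        rw [if_neg this]
      have hL : ∀ i ∈ range p,
          c i * (if i ≤ n then ((p - 1 - 2 * i).choose (n - i) : ℝ) else 0) = 0 := by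
        intro i hi
        simp only [Finset.mem_range] at hi
        by_cases h : i ≤ n
        · have : (p - 1 - 2 * i) < n - i := by omega
          simp [h, Nat.choose_eq_zero_of_lt this]
        · simp [h]
      rw [Finset.sum_congr rfl hL, Finset.sum_congr rfl hR]

  have heval := congrArg (Polynomial.eval β) hpoly
  simp only [eval_finset_sum, eval_mul, eval_pow, eval_add, eval_one, eval_X, eval_C] at heval
  rw [hc] at heval
  -- RHS reindex
  have hIcc : ∑ k ∈ Finset.Icc 1 p,
      (1 / (k : ℝ)) * ((p - 1).choose (k - 1) : ℝ) * (p.choose (k - 1) : ℝ) * β ^ (p - k)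
      = ∑ e ∈ range p, b e * β ^ (p - 1 - e) := by
    rw [← Finset.Ico_add_one_right_eq_Icc, Finset.sum_Ico_eq_sum_range]
    refine Finset.sum_congr (by norm_num) fun e he => ?_
    have h1 : 1 + e - 1 = e := by omega
    have h2 : p - (1 + e) = p - 1 - e := by omega
    rw [h1, h2, hb]
    push_cast
    ring
  rw [hIcc, ← heval]
  exact Finset.sum_congr rfl fun i _ => by ring


lemma cos_even_integral (i : ℕ) :
    ∫ θ in (0:ℝ)..π, Real.cos θ ^ (2 * i) = π * ((2 * i).choose i : ℝ) / 4 ^ i := by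
  induction i with
  | zero => simp
  | succ k ih =>
    have h := integral_cos_pow (a := 0) (b := π) (2 * k)
    rw [show 2 * k + 2 = 2 * (k + 1) by ring] at h
    rw [h, ih]
    simp only [Real.sin_zero, Real.sin_pi, mul_zero, zero_mul, sub_zero, zero_div, zero_add]
    have key : ((k : ℝ) + 1) * ((2 * (k + 1)).choose (k + 1) : ℝ)
        = 2 * (2 * k + 1) * ((2 * k).choose k : ℝ) := by
      exact_mod_cast congrArg (Nat.cast : ℕ → ℝ) (Nat.succ_mul_centralBinom_succ k)
    have hk1 : ((k : ℝ) + 1) ≠ 0 := by positivity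
    have h4 : (4 : ℝ) ^ k ≠ 0 := by positivity
    have hC : ((2 * (k + 1)).choose (k + 1) : ℝ)
        = 2 * (2 * (k : ℝ) + 1) * ((2 * k).choose k : ℝ) / ((k : ℝ) + 1) := by
      rw [eq_div_iff hk1]; linear_combination key
    rw [hC]
    push_cast
    field_simp
    ring

lemma cos_sin_even (i : ℕ) :
    ∫ θ in (0:ℝ)..π, Real.cos θ ^ (2 * i) * Real.sin θ ^ 2
      = π * ((2 * i).choose i : ℝ) / (4 ^ i * (2 * (i + 1))) := by
  have hsplit : ∀ θ : ℝ, Real.cos θ ^ (2 * i) * Real.sin θ ^ 2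
      = Real.cos θ ^ (2 * i) - Real.cos θ ^ (2 * (i + 1)) := by
    intro θ
    have := Real.sin_sq_add_cos_sq θ
    have h2 : Real.sin θ ^ 2 = 1 - Real.cos θ ^ 2 := by linarith
    rw [h2]; ring
  rw [intervalIntegral.integral_congr (fun θ _ => hsplit θ)]
  rw [intervalIntegral.integral_sub (by apply Continuous.intervalIntegrable; fun_prop)
    (by apply Continuous.intervalIntegrable; fun_prop)]
  rw [cos_even_integral i, cos_even_integral (i + 1)]
  have key : ((i : ℝ) + 1) * ((2 * (i + 1)).choose (i + 1) : ℝ)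
      = 2 * (2 * i + 1) * ((2 * i).choose i : ℝ) := by
    exact_mod_cast congrArg (Nat.cast : ℕ → ℝ) (Nat.succ_mul_centralBinom_succ i)
  have hi1 : ((i : ℝ) + 1) ≠ 0 := by positivity
  have h4 : (4 : ℝ) ^ i ≠ 0 := by positivity
  have hC : ((2 * (i + 1)).choose (i + 1) : ℝ)
      = 2 * (2 * (i : ℝ) + 1) * ((2 * i).choose i : ℝ) / ((i : ℝ) + 1) := by
    rw [eq_div_iff hi1]; linear_combination key
  rw [hC]
  push_cast
  field_simp
  ring

lemma cos_sin_odd (i : ℕ) :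
    ∫ θ in (0:ℝ)..π, Real.cos θ ^ (2 * i + 1) * Real.sin θ ^ 2 = 0 := by
  have h : ∀ θ : ℝ, Real.cos θ ^ (2 * i + 1) * Real.sin θ ^ 2
      = Real.sin θ ^ 2 * Real.cos θ ^ (2 * i + 1) := fun θ => by ring
  rw [intervalIntegral.integral_congr (fun θ _ => h θ)]
  rw [integral_sin_pow_mul_cos_pow_odd 2 i]
  simp


lemma sum_range_two_mul (n : ℕ) (f : ℕ → ℝ) :
    ∑ j ∈ range (2 * n), f j = ∑ i ∈ range n, (f (2 * i) + f (2 * i + 1)) := by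
  induction n with
  | zero => simp
  | succ k ih =>
    rw [Finset.sum_range_succ, ← ih, show 2 * (k + 1) = 2 * k + 1 + 1 by ring,
      Finset.sum_range_succ, Finset.sum_range_succ]
    ring

/-- The `p`-th moment of the Marčenko-Pastur distribution with parameter `β ∈ (0,1]`
equals the Narayana polynomial `∑_{k=1}^p T(p,k) β^{p-k}`. -/
theorem marcenko_pastur_moments (β : ℝ) (hβ : 0 < β) (hβ1 : β ≤ 1) (p : ℕ) (hp : 1 ≤ p)
    (c₁ c₂ : ℝ) (hc₁ : c₁ = (1 + Real.sqrt β) ^ 2) (hc₂ : c₂ = (1 - Real.sqrt β) ^ 2) :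
    ∫ x in c₂..c₁, x ^ p * Real.sqrt ((c₁ - x) * (x - c₂)) / (2 * π * x * β) =
      ∑ k ∈ Finset.Icc 1 p,
        (1 / (k : ℝ)) * (Nat.choose (p - 1) (k - 1) : ℝ) * (Nat.choose p (k - 1) : ℝ) *
          β ^ (p - k) := by
  have hs : Real.sqrt β ^ 2 = β := Real.sq_sqrt hβ.le
  set s := Real.sqrt β with hsdef
  have hs0 : 0 < s := Real.sqrt_pos.2 hβ
  set m : ℝ := 1 + β with hm
  set r : ℝ := 2 * s with hrdef
  have hr0 : 0 ≤ r := by positivity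
  have hr2 : r ^ 2 = 4 * β := by rw [hrdef]; linear_combination 4 * hs
  have hc₁' : c₁ = m + r := by rw [hc₁, hm, hrdef]; linear_combination hs
  have hc₂' : c₂ = m - r := by rw [hc₂, hm, hrdef]; linear_combination hs
  have hπ : (π : ℝ) ≠ 0 := Real.pi_ne_zero
  have hβ0 : β ≠ 0 := ne_of_gt hβ
  -- Step A : a.e. rewrite of the integrand
  have h0 : ∀ᵐ (x : ℝ), x ≠ 0 := by
    rw [MeasureTheory.ae_iff]
    simp only [ne_eq, not_not]
    simpa using MeasureTheory.measure_singleton (0 : ℝ)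
  have hae : ∫ x in c₂..c₁, x ^ p * Real.sqrt ((c₁ - x) * (x - c₂)) / (2 * π * x * β)
      = ∫ x in c₂..c₁, x ^ (p - 1) * Real.sqrt ((c₁ - x) * (x - c₂)) / (2 * π * β) := by
    apply intervalIntegral.integral_congr_ae
    filter_upwards [h0] with x hx _
    have hxp : x ^ p = x ^ (p - 1) * x := by
      rw [← pow_succ, Nat.sub_add_cancel hp]
    rw [hxp]
    field_simp
  rw [hae]
  have hconst : ∫ x in c₂..c₁, x ^ (p - 1) * Real.sqrt ((c₁ - x) * (x - c₂)) / (2 * π * β)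
      = (∫ x in c₂..c₁, x ^ (p - 1) * Real.sqrt ((c₁ - x) * (x - c₂))) / (2 * π * β) :=
    intervalIntegral.integral_div _ _
  rw [hconst]
  -- Step B : substitution x = m - r cos θ
  set g : ℝ → ℝ := fun x => x ^ (p - 1) * Real.sqrt ((c₁ - x) * (x - c₂)) with hg
  have hgc : Continuous g := by
    apply Continuous.mul (by fun_prop)
    exact Real.continuous_sqrt.comp (by fun_prop)
  have hderiv : ∀ θ ∈ Set.uIcc (0:ℝ) π,
      HasDerivAt (fun θ : ℝ => m - r * Real.cos θ) (r * Real.sin θ) θ := by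
    intro θ _
    have := ((Real.hasDerivAt_cos θ).const_mul r).const_sub m
    convert this using 1
    all_goals first | rfl | ring
  have hsub := (intervalIntegral.integral_comp_smul_deriv hderiv
    (Continuous.continuousOn (by fun_prop)) hgc)
  have hf0 : m - r * Real.cos 0 = c₂ := by rw [Real.cos_zero, hc₂']; ring
  have hfπ : m - r * Real.cos π = c₁ := by rw [Real.cos_pi, hc₁']; ring
  rw [hf0, hfπ] at hsub
  rw [← hsub]
  -- Step C : pointwise simplification on [0, π]
  have hpt : Set.EqOn (fun θ => (r * Real.sin θ) • (g ∘ (fun θ : ℝ => m - r * Real.cos θ)) θ)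
      (fun θ => ∑ j ∈ range p,
        ((-r) ^ j * m ^ (p - 1 - j) * ((p - 1).choose j : ℝ) * r ^ 2)
          * (Real.cos θ ^ j * Real.sin θ ^ 2))
      (Set.uIcc (0:ℝ) π) := by
    intro θ hθ
    have hθ' : θ ∈ Set.Icc (0:ℝ) π := by
      rwa [Set.uIcc_of_le Real.pi_pos.le] at hθ
    have hsin : 0 ≤ Real.sin θ := Real.sin_nonneg_of_nonneg_of_le_pi hθ'.1 hθ'.2
    have hprod : (c₁ - (m - r * Real.cos θ)) * ((m - r * Real.cos θ) - c₂)
        = (r * Real.sin θ) ^ 2 := by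
      rw [hc₁', hc₂']
      linear_combination (-(r ^ 2)) * (Real.sin_sq_add_cos_sq θ)
    simp only [Function.comp, hg, smul_eq_mul]
    rw [hprod, Real.sqrt_sq (mul_nonneg hr0 hsin)]
    -- binomial expansion
    have hbin : (m - r * Real.cos θ) ^ (p - 1)
        = ∑ j ∈ range p, (-(r * Real.cos θ)) ^ j * m ^ (p - 1 - j) * ((p - 1).choose j : ℝ) := by
      have := add_pow (-(r * Real.cos θ)) m (p - 1)
      rw [Nat.sub_add_cancel hp] at this
      rw [show m - r * Real.cos θ = -(r * Real.cos θ) + m by ring, this]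
    rw [hbin, Finset.sum_mul, Finset.mul_sum]
    refine Finset.sum_congr rfl fun j _ => ?_
    rw [neg_pow (r * Real.cos θ) j, neg_pow r j]
    ring
  rw [intervalIntegral.integral_congr hpt]
  -- Step D : integrate term by term
  rw [intervalIntegral.integral_finset_sum (fun j _ => by
    apply Continuous.intervalIntegrable
    fun_prop)]
  have hterm : ∀ j ∈ range p,
      (∫ θ in (0:ℝ)..π, ((-r) ^ j * m ^ (p - 1 - j) * ((p - 1).choose j : ℝ) * r ^ 2)
        * (Real.cos θ ^ j * Real.sin θ ^ 2))
      = ((-r) ^ j * m ^ (p - 1 - j) * ((p - 1).choose j : ℝ) * r ^ 2)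
        * ∫ θ in (0:ℝ)..π, Real.cos θ ^ j * Real.sin θ ^ 2 := fun j _ =>
    intervalIntegral.integral_const_mul _ _
  rw [Finset.sum_congr rfl hterm]
  -- Step E : extend to range (2p) and split by parity
  set K : ℕ → ℝ := fun j => (-r) ^ j * m ^ (p - 1 - j) * ((p - 1).choose j : ℝ) * r ^ 2 with hK
  set W : ℕ → ℝ := fun j => ∫ θ in (0:ℝ)..π, Real.cos θ ^ j * Real.sin θ ^ 2 with hW
  have hext : ∑ j ∈ range p, K j * W j = ∑ j ∈ range (2 * p), K j * W j := by
    refine Finset.sum_subset (Finset.range_subset_range.2 (by omega)) fun j _ hj => ?_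
    have : p - 1 < j := by simp only [Finset.mem_range] at hj; omega
    simp [hK, Nat.choose_eq_zero_of_lt this]
  rw [hext, sum_range_two_mul]
  have hsplit : ∀ i ∈ range p,
      K (2 * i) * W (2 * i) + K (2 * i + 1) * W (2 * i + 1)
      = ((p - 1).choose (2 * i) * (2 * i).choose i : ℝ) / (i + 1)
          * (β ^ i * (1 + β) ^ (p - 1 - 2 * i)) * (2 * π * β) := by
    intro i _
    simp only [hK, hW]
    rw [cos_sin_even i, cos_sin_odd i, mul_zero, add_zero]
    have hneg : (-r) ^ (2 * i) = 4 ^ i * β ^ i := by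
      rw [pow_mul, show (-r) ^ 2 = r ^ 2 by ring, hr2, mul_pow]
    rw [hneg, hr2]
    have h4 : (4 : ℝ) ^ i ≠ 0 := by positivity
    have hi1 : ((i : ℝ) + 1) ≠ 0 := by positivity
    rw [hm]
    field_simp
    ring
  rw [Finset.sum_congr rfl hsplit, ← Finset.sum_mul]
  rw [mul_div_assoc, div_self (by positivity : (2 * π * β : ℝ) ≠ 0), mul_one]
  exact narayana p hp β
end

section
/- For β ∈ (0,1] and α > 0, the integral of αβ/(x + αβ) against the Marčenko-Pastur density equals (2β − θ + sqrt(θ² − 4β))/(2β), where θ = 1 + β(1 + α). That is, ∫_{c_2}^{c_1} [αβ/(x+αβ)] · sqrt((c_1−x)(x−c_2))/(2πxβ) dx = (2β − θ + sqrt(θ² − 4β))/(2β). -/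
open Real Set MeasureTheory intervalIntegral

lemma d_sqrtP (a r y : ℝ) (hP : 0 < (a+r-y)*(y-(a-r))) :
    HasDerivAt (fun y => Real.sqrt ((a+r-y)*(y-(a-r))))
      ((a-y)/Real.sqrt ((a+r-y)*(y-(a-r)))) y := by
  have h1 : HasDerivAt (fun y => (a+r-y)*(y-(a-r))) (2*(a-y)) y := by
    have := (((hasDerivAt_id y).const_sub (a+r)).mul ((hasDerivAt_id y).sub_const (a-r)))
    exact this.congr_deriv (by simp [id_eq]; ring)
  have := h1.sqrt (ne_of_gt hP)
  convert this using 1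
  field_simp

lemma d_arcsin1 (a r y : ℝ) (hr : 0 < r) (hy1 : a - r < y) (hy2 : y < a + r) :
    HasDerivAt (fun y => Real.arcsin ((y-a)/r))
      (1/Real.sqrt ((a+r-y)*(y-(a-r)))) y := by
  have hP : 0 < (a+r-y)*(y-(a-r)) := mul_pos (by linarith) (by linarith)
  have hsP : 0 < Real.sqrt ((a+r-y)*(y-(a-r))) := Real.sqrt_pos.2 hP
  have hne1 : (y-a)/r ≠ -1 := by
    intro h; rw [div_eq_iff hr.ne'] at h; nlinarith
  have hne2 : (y-a)/r ≠ 1 := by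
    intro h; rw [div_eq_iff hr.ne'] at h; nlinarith
  have hin : HasDerivAt (fun y => (y-a)/r) (1/r) y := by
    have := ((hasDerivAt_id y).sub_const a).div_const r
    exact this
  have := (Real.hasDerivAt_arcsin hne1 hne2).comp y hin
  refine this.congr_deriv ?_
  have hids : 1 - ((y-a)/r)^2 = ((a+r-y)*(y-(a-r)))/r^2 := by
    field_simp; ring
  rw [hids, Real.sqrt_div (le_of_lt hP), Real.sqrt_sq hr.le]
  field_simp

lemma d_arcsin2 (a r D y : ℝ) (hr : 0 < r) (hD : 0 < D) (hrD : D = a^2 - r^2)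
    (hy1 : a - r < y) (hy2 : y < a + r) (hy0 : 0 < y) :
    HasDerivAt (fun y => Real.arcsin ((a*y-D)/(r*y)))
      (Real.sqrt D/(y * Real.sqrt ((a+r-y)*(y-(a-r))))) y := by
  have hP : 0 < (a+r-y)*(y-(a-r)) := mul_pos (by linarith) (by linarith)
  have hsP : 0 < Real.sqrt ((a+r-y)*(y-(a-r))) := Real.sqrt_pos.2 hP
  have hsD : 0 < Real.sqrt D := Real.sqrt_pos.2 hD
  have hids : 1 - ((a*y-D)/(r*y))^2 = D*((a+r-y)*(y-(a-r)))/(r*y)^2 := by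
    field_simp
    ring_nf
    nlinarith [hrD]
  have hpos : 0 < D*((a+r-y)*(y-(a-r)))/(r*y)^2 := by positivity
  have hne1 : (a*y-D)/(r*y) ≠ -1 := by
    intro h; rw [h] at hids; norm_num at hids; nlinarith
  have hne2 : (a*y-D)/(r*y) ≠ 1 := by
    intro h; rw [h] at hids; norm_num at hids; nlinarith
  have hin : HasDerivAt (fun y => (a*y-D)/(r*y)) (D/(r*y^2)) y := by
    have hnum : HasDerivAt (fun y => a*y-D) a y := by
      simpa using ((hasDerivAt_id y).const_mul a).sub_const D
    have hden : HasDerivAt (fun y => r*y) r y := by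
      simpa using (hasDerivAt_id y).const_mul r
    have := hnum.div hden (by positivity)
    refine this.congr_deriv ?_
    field_simp
    ring
  have := (Real.hasDerivAt_arcsin hne1 hne2).comp y hin
  refine this.congr_deriv ?_
  rw [hids, Real.sqrt_div (by positivity), Real.sqrt_sq (by positivity),
    Real.sqrt_mul hD.le]
  have hDD : Real.sqrt D * Real.sqrt D = D := Real.mul_self_sqrt hD.le
  field_simp
  linear_combination (-1 : ℝ) * hDD

lemma mp_key (a r D : ℝ) (hr : 0 < r) (hD : 0 ≤ D) (hrD : D = a^2 - r^2)
    (hlow : 0 ≤ a - r)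
    (hint : IntervalIntegrable (fun y => Real.sqrt ((a+r-y)*(y-(a-r))) / y)
      MeasureTheory.volume (a-r) (a+r)) :
    ∫ y in (a-r)..(a+r), Real.sqrt ((a+r-y)*(y-(a-r))) / y = π * (a - Real.sqrt D) := by
  have hab : a - r ≤ a + r := by linarith
  rcases eq_or_lt_of_le hD with hD0 | hD0
  · -- D = 0, so a = r
    have har : a = r := by nlinarith
    set F : ℝ → ℝ := fun y => Real.sqrt ((a+r-y)*(y-(a-r))) + a * Real.arcsin ((y-a)/r)
      with hF
    have hcP : Continuous (fun y : ℝ => (a+r-y)*(y-(a-r))) :=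
      (continuous_const.sub continuous_id).mul (continuous_id.sub continuous_const)
    have hcA : Continuous (fun y : ℝ => Real.arcsin ((y-a)/r)) :=
      Real.continuous_arcsin.comp ((continuous_id.sub continuous_const).div_const r)
    have hcont : ContinuousOn F (Icc (a-r) (a+r)) := by
      exact ((Real.continuous_sqrt.comp hcP).add (continuous_const.mul hcA)).continuousOn
    have hderiv : ∀ y ∈ Ioo (a-r) (a+r),
        HasDerivWithinAt F (Real.sqrt ((a+r-y)*(y-(a-r))) / y) (Ioi y) y := by
      intro y hy
      have hy1 := hy.1; have hy2 := hy.2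
      have hy0 : 0 < y := by linarith
      have hP : 0 < (a+r-y)*(y-(a-r)) := mul_pos (by linarith) (by linarith)
      have hsP : 0 < Real.sqrt ((a+r-y)*(y-(a-r))) := Real.sqrt_pos.2 hP
      have hPP : Real.sqrt ((a+r-y)*(y-(a-r))) * Real.sqrt ((a+r-y)*(y-(a-r)))
          = (a+r-y)*(y-(a-r)) := Real.mul_self_sqrt hP.le
      have hd := (d_sqrtP a r y hP).add ((d_arcsin1 a r y hr hy1 hy2).const_mul a)
      have heq : (a-y)/Real.sqrt ((a+r-y)*(y-(a-r)))
          + a * (1/Real.sqrt ((a+r-y)*(y-(a-r))))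
          = Real.sqrt ((a+r-y)*(y-(a-r))) / y := by
        have hD0' : D = 0 := hD0.symm
        field_simp
        linear_combination (-1 : ℝ) * hPP + hD0' - hrD
      rw [← heq]
      exact hd.hasDerivWithinAt
    rw [intervalIntegral.integral_eq_sub_of_hasDeriv_right_of_le hab hcont hderiv hint]
    have e1 : F (a+r) = a * (π/2) := by
      rw [hF]
      simp only
      have : a + r - (a+r) = 0 := by ring
      rw [this, zero_mul, Real.sqrt_zero]
      have : (a + r - a)/r = 1 := by field_simp; ring
      rw [this, Real.arcsin_one]
      ring
    have e2 : F (a-r) = a * (-(π/2)) := by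
      rw [hF]
      simp only
      have h0 : a - r - (a-r) = 0 := by ring
      rw [h0]
      have : (a + r - (a-r)) * 0 = 0 := by ring
      rw [this, Real.sqrt_zero]
      have : (a - r - a)/r = -1 := by field_simp; ring
      rw [this, Real.arcsin_neg_one]
      ring
    rw [e1, e2, ← hD0, Real.sqrt_zero]
    ring
  · -- D > 0, so a - r > 0
    have hlow' : 0 < a - r := by nlinarith
    have hsD : 0 < Real.sqrt D := Real.sqrt_pos.2 hD0
    have hDD : Real.sqrt D * Real.sqrt D = D := Real.mul_self_sqrt hD0.le
    set F : ℝ → ℝ := fun y => Real.sqrt ((a+r-y)*(y-(a-r))) + a * Real.arcsin ((y-a)/r)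
      - Real.sqrt D * Real.arcsin ((a*y-D)/(r*y)) with hF
    have hcP : Continuous (fun y : ℝ => (a+r-y)*(y-(a-r))) :=
      (continuous_const.sub continuous_id).mul (continuous_id.sub continuous_const)
    have hcA : Continuous (fun y : ℝ => Real.arcsin ((y-a)/r)) :=
      Real.continuous_arcsin.comp ((continuous_id.sub continuous_const).div_const r)
    have hcont : ContinuousOn F (Icc (a-r) (a+r)) := by
      apply ContinuousOn.sub
      · exact ((Real.continuous_sqrt.comp hcP).add (continuous_const.mul hcA)).continuousOn
      · apply ContinuousOn.mul continuousOn_const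
        apply Real.continuous_arcsin.comp_continuousOn
        apply ContinuousOn.div
        · exact ((continuous_const.mul continuous_id).sub continuous_const).continuousOn
        · exact (continuous_const.mul continuous_id).continuousOn
        · intro y hy
          have : 0 < y := lt_of_lt_of_le hlow' hy.1
          positivity
    have hderiv : ∀ y ∈ Ioo (a-r) (a+r),
        HasDerivWithinAt F (Real.sqrt ((a+r-y)*(y-(a-r))) / y) (Ioi y) y := by
      intro y hy
      have hy1 := hy.1; have hy2 := hy.2
      have hy0 : 0 < y := by linarith
      have hP : 0 < (a+r-y)*(y-(a-r)) := mul_pos (by linarith) (by linarith)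
      have hsP : 0 < Real.sqrt ((a+r-y)*(y-(a-r))) := Real.sqrt_pos.2 hP
      have hPP : Real.sqrt ((a+r-y)*(y-(a-r))) * Real.sqrt ((a+r-y)*(y-(a-r)))
          = (a+r-y)*(y-(a-r)) := Real.mul_self_sqrt hP.le
      have hd := ((d_sqrtP a r y hP).add ((d_arcsin1 a r y hr hy1 hy2).const_mul a)).sub
        ((d_arcsin2 a r D y hr hD0 hrD hy1 hy2 hy0).const_mul (Real.sqrt D))
      have heq : (a-y)/Real.sqrt ((a+r-y)*(y-(a-r)))
          + a * (1/Real.sqrt ((a+r-y)*(y-(a-r))))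
          - Real.sqrt D * (Real.sqrt D/(y * Real.sqrt ((a+r-y)*(y-(a-r)))))
          = Real.sqrt ((a+r-y)*(y-(a-r))) / y := by
        field_simp
        linear_combination (-1 : ℝ) * hDD - hPP - hrD
      rw [← heq]
      exact hd.hasDerivWithinAt
    rw [intervalIntegral.integral_eq_sub_of_hasDeriv_right_of_le hab hcont hderiv hint]
    have e1 : F (a+r) = a * (π/2) - Real.sqrt D * (π/2) := by
      rw [hF]
      simp only
      have h1 : a + r - (a+r) = 0 := by ring
      rw [h1, zero_mul, Real.sqrt_zero]
      have h2 : (a + r - a)/r = 1 := by field_simp; ring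
      have h3 : (a*(a+r)-D)/(r*(a+r)) = 1 := by
        rw [hrD, div_eq_one_iff_eq (ne_of_gt (by nlinarith : (0:ℝ) < r*(a+r)))]
        ring
      rw [h2, h3, Real.arcsin_one]
      ring
    have e2 : F (a-r) = a * (-(π/2)) + Real.sqrt D * (π/2) := by
      rw [hF]
      simp only
      have h0 : a - r - (a-r) = 0 := by ring
      rw [h0]
      have h1 : (a + r - (a-r)) * 0 = 0 := by ring
      rw [h1, Real.sqrt_zero]
      have h2 : (a - r - a)/r = -1 := by field_simp; ring
      have h3 : (a*(a-r)-D)/(r*(a-r)) = -1 := by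
        rw [hrD, div_eq_iff (ne_of_gt (mul_pos hr hlow'))]
        ring
      rw [h2, h3, Real.arcsin_neg_one]
      ring
    rw [e1, e2]
    ring

lemma mp_int (a r : ℝ) (hr : 0 < r) (hlow : 0 ≤ a - r) :
    IntervalIntegrable (fun y => Real.sqrt ((a+r-y)*(y-(a-r)))/y)
      MeasureTheory.volume (a-r) (a+r) := by
  have hab : a - r ≤ a + r := by linarith
  have hcP : Continuous (fun y : ℝ => (a+r-y)*(y-(a-r))) :=
    (continuous_const.sub continuous_id).mul (continuous_id.sub continuous_const)
  rcases eq_or_lt_of_le hlow with h0 | h0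
  · -- a = r, singular at left endpoint 0
    have hmeas : MeasureTheory.AEStronglyMeasurable
        (fun y => Real.sqrt ((a+r-y)*(y-(a-r)))/y)
        (MeasureTheory.volume.restrict (Ioc (a-r) (a+r))) :=
      ((Real.continuous_sqrt.comp hcP).measurable.div measurable_id).aestronglyMeasurable
    have hgint : IntervalIntegrable (fun y : ℝ => Real.sqrt (a+r) * y ^ (-(1/2) : ℝ))
        MeasureTheory.volume (a-r) (a+r) :=
      (intervalIntegral.intervalIntegrable_rpow' (by norm_num)).const_mul _
    rw [intervalIntegrable_iff_integrableOn_Ioc_of_le hab]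
    rw [intervalIntegrable_iff_integrableOn_Ioc_of_le hab] at hgint
    apply hgint.mono' hmeas
    rw [MeasureTheory.ae_restrict_iff' measurableSet_Ioc]
    apply MeasureTheory.ae_of_all
    intro y hy
    have hy0 : 0 < y := lt_of_le_of_lt hlow hy.1
    have hy2 : y ≤ a + r := hy.2
    have hsy : Real.sqrt y * Real.sqrt y = y := Real.mul_self_sqrt hy0.le
    have hsy0 : 0 < Real.sqrt y := Real.sqrt_pos.2 hy0
    have hb1 : Real.sqrt ((a+r-y)*(y-(a-r))) ≤ Real.sqrt ((a+r) * y) := by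
      apply Real.sqrt_le_sqrt
      have h1 : a + r - y ≤ a + r := by linarith
      have h2 : y - (a-r) ≤ y := by linarith
      nlinarith [hy.1, hlow]
    have hnorm : ‖Real.sqrt ((a+r-y)*(y-(a-r)))/y‖
        = Real.sqrt ((a+r-y)*(y-(a-r)))/y := by
      rw [Real.norm_eq_abs, abs_of_nonneg (by positivity)]
    rw [hnorm]
    have hrpow : y ^ (-(1/2) : ℝ) = (Real.sqrt y)⁻¹ := by
      rw [Real.rpow_neg hy0.le, Real.sqrt_eq_rpow]
    rw [hrpow]
    rw [div_le_iff₀ hy0]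
    calc Real.sqrt ((a+r-y)*(y-(a-r))) ≤ Real.sqrt ((a+r) * y) := hb1
      _ = Real.sqrt (a+r) * Real.sqrt y := Real.sqrt_mul (by linarith) y
      _ = Real.sqrt (a+r) * (Real.sqrt y)⁻¹ * y := by
          field_simp
          linear_combination Real.sqrt (a+r) * hsy
  · -- a - r > 0 : continuous
    apply ContinuousOn.intervalIntegrable
    apply ContinuousOn.div (Real.continuous_sqrt.comp hcP).continuousOn
      continuous_id.continuousOn
    intro y hy
    rw [Set.uIcc_of_le hab] at hy
    have : 0 < y := lt_of_lt_of_le h0 hy.1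
    exact this.ne'

/-- The LMMSE integral against the Marčenko-Pastur density:
`∫ αβ/(x+αβ) f_MP(x) dx = (2β - θ + √(θ² - 4β))/(2β)` with `θ = 1 + β(1+α)`. -/
theorem mse_marcenko_pastur (β α : ℝ) (hβ : 0 < β) (hβ1 : β ≤ 1) (hα : 0 < α)
    (c₁ c₂ θ : ℝ) (hc₁ : c₁ = (1 + Real.sqrt β) ^ 2) (hc₂ : c₂ = (1 - Real.sqrt β) ^ 2)
    (hθ : θ = 1 + β * (1 + α)) :
    ∫ x in c₂..c₁,
        (α * β / (x + α * β)) * (Real.sqrt ((c₁ - x) * (x - c₂)) / (2 * π * x * β)) =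
      (2 * β - θ + Real.sqrt (θ ^ 2 - 4 * β)) / (2 * β) := by
  have hsq : Real.sqrt β ^ 2 = β := Real.sq_sqrt hβ.le
  have hsb : 0 < Real.sqrt β := Real.sqrt_pos.2 hβ
  have hc1' : c₁ = (1+β) + 2*Real.sqrt β := by rw [hc₁]; linear_combination hsq
  have hc2' : c₂ = (1+β) - 2*Real.sqrt β := by rw [hc₂]; linear_combination hsq
  have hc2nn : 0 ≤ c₂ := by rw [hc₂]; positivity
  have hcc : c₂ ≤ c₁ := by rw [hc1', hc2']; linarith
  have hαβ : 0 < α * β := mul_pos hα hβ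
  -- rewrite the integrand
  have hEq : Set.EqOn
      (fun x => (α * β / (x + α * β)) * (Real.sqrt ((c₁ - x) * (x - c₂)) / (2 * π * x * β)))
      (fun x => (1/(2*π*β)) * (Real.sqrt ((c₁ - x) * (x - c₂))/x
        - Real.sqrt ((c₁ - x) * (x - c₂))/(x + α*β)))
      (Set.uIcc c₂ c₁) := by
    intro x hx
    rw [Set.uIcc_of_le hcc] at hx
    have hx0 : 0 ≤ x := le_trans hc2nn hx.1
    rcases eq_or_lt_of_le hx0 with h0 | h0
    · -- x = 0, so c₂ = 0
      have hx0' : x = 0 := h0.symm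
      have hc20 : c₂ = 0 := le_antisymm (hx0' ▸ hx.1) hc2nn
      simp only [hx0', hc20]
      norm_num
    · have hxαβ : 0 < x + α * β := by linarith
      simp only
      field_simp
      ring
  rw [intervalIntegral.integral_congr hEq]
  rw [intervalIntegral.integral_const_mul]
  -- integrability of both pieces
  have hint1 : IntervalIntegrable (fun x => Real.sqrt ((c₁ - x) * (x - c₂))/x)
      MeasureTheory.volume c₂ c₁ := by
    have := mp_int (1+β) (2*Real.sqrt β) (by positivity) (by rw [← hc2']; exact hc2nn)
    rw [← hc1', ← hc2'] at this
    exact this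
  have hint2 : IntervalIntegrable (fun x => Real.sqrt ((c₁ - x) * (x - c₂))/(x + α*β))
      MeasureTheory.volume c₂ c₁ := by
    apply ContinuousOn.intervalIntegrable
    apply ContinuousOn.div
    · exact (Real.continuous_sqrt.comp
        ((continuous_const.sub continuous_id).mul (continuous_id.sub continuous_const))).continuousOn
    · exact (continuous_id.add continuous_const).continuousOn
    · intro x hx
      rw [Set.uIcc_of_le hcc] at hx
      have : 0 ≤ x := le_trans hc2nn hx.1
      positivity
  rw [intervalIntegral.integral_sub hint1 hint2]
  -- first integral
  have hI1 : ∫ x in c₂..c₁, Real.sqrt ((c₁ - x) * (x - c₂))/x = π * ((1+β) - (1-β)) := by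
    have hkey := mp_key (1+β) (2*Real.sqrt β) ((1-β)^2) (by positivity)
      (by positivity) (by linear_combination 4*hsq)
      (by rw [← hc2']; exact hc2nn)
      (by
        have := mp_int (1+β) (2*Real.sqrt β) (by positivity) (by rw [← hc2']; exact hc2nn)
        exact this)
    rw [← hc1', ← hc2'] at hkey
    rw [hkey, Real.sqrt_sq (by linarith)]
  -- second integral
  have hθ' : θ = 1 + β + α * β := by rw [hθ]; ring
  have hθlow : 0 ≤ θ - 2*Real.sqrt β := by nlinarith [sq_nonneg (1 - Real.sqrt β)]
  have hI2 : ∫ x in c₂..c₁, Real.sqrt ((c₁ - x) * (x - c₂))/(x + α*β)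
      = π * (θ - Real.sqrt (θ^2 - 4*β)) := by
    have hfun : (fun x => Real.sqrt ((c₁ - x) * (x - c₂))/(x + α*β))
        = (fun x => (fun y => Real.sqrt ((θ + 2*Real.sqrt β - y)*(y - (θ - 2*Real.sqrt β)))/y)
            (x + α*β)) := by
      funext x
      simp only
      congr 2
      rw [hc1', hc2', hθ']
      ring
    rw [hfun, intervalIntegral.integral_comp_add_right
      (fun y => Real.sqrt ((θ + 2*Real.sqrt β - y)*(y - (θ - 2*Real.sqrt β)))/y) (α*β)]
    have hb1 : c₂ + α*β = θ - 2*Real.sqrt β := by rw [hc2', hθ']; ring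
    have hb2 : c₁ + α*β = θ + 2*Real.sqrt β := by rw [hc1', hθ']; ring
    rw [hb1, hb2]
    exact mp_key θ (2*Real.sqrt β) (θ^2 - 4*β) (by positivity)
      (by nlinarith) (by linear_combination 4*hsq) hθlow
      (mp_int θ (2*Real.sqrt β) (by positivity) hθlow)
  rw [hI1, hI2]
  have hπ : π ≠ 0 := Real.pi_ne_zero
  field_simp
  ring
end
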